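/- arXiv:1701.05738 — 2 statements merged into one kernel-verified Lean document; each statement's English description precedes it below -/
import Mathlib

section
/- In a move-to-front record, infinitely-visited indices eventually precede finitely-visited ones: with the setup as before, if index i appears in infinitely many M_t and index j appears in only finitely many M_t, then eventually (for all sufficiently large t) the position of i in π_t is strictly smaller than the position of j in π_t. -/
/-- Move-to-front update: the indices in `M` are moved to the front positions
(preserving their relative order in `π`), all other indices are shifted right
preserving their relative order. -/
noncomputable def moveToFront {k : ℕ} (π : Equiv.Perm (Fin k)) (M : Finset (Fin k)) :
    Equiv.Perm (Fin k) :=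
  let L : List (Fin k) :=
    ((List.finRange k).map π).filter (fun x => decide (x ∈ M)) ++
      ((List.finRange k).map π).filter (fun x => !decide (x ∈ M))
  have hperm : List.Perm L ((List.finRange k).map π) :=
    List.filter_append_perm _ _
  have hnodup : L.Nodup :=
    hperm.nodup_iff.mpr ((List.nodup_finRange k).map π.injective)
  have hlen : L.length = k := by
    simpa using hperm.length_eq
  Equiv.ofBijective (fun j => L.get (Fin.cast hlen.symm j))
    (Finite.injective_iff_bijective.mp
      (fun a b hab => by
        have := (List.nodup_iff_injective_get.mp hnodup) hab
        exact Fin.cast_injective _ this))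

/-- The move-to-front record: `π (t+1)` is obtained from `π t` by moving the
indices in `M t` to the front. -/
noncomputable def mtfSeq {k : ℕ} (π0 : Equiv.Perm (Fin k)) (M : ℕ → Finset (Fin k)) :
    ℕ → Equiv.Perm (Fin k) :=
  fun t => Nat.rec π0 (fun s p => moveToFront p (M s)) t

open List

/-- Filtering preserves relative order of elements. -/
theorem filter_indexOf_lt_filter {α : Type*} [DecidableEq α] (p : α → Bool) :
    ∀ (l : List α) {a b : α}, a ∈ l.filter p → b ∈ l.filter p →
      l.idxOf a < l.idxOf b → (l.filter p).idxOf a < (l.filter p).idxOf b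
  | [], a, b, ha, _, _ => by simp at ha
  | c :: l, a, b, ha, hb, h => by
    by_cases hca : c = a
    · subst hca
      have hpc : p c = true := (mem_filter.mp ha).2
      have hba : b ≠ c := by
        rintro rfl
        simp [idxOf_cons_self] at h
      rw [filter_cons_of_pos hpc, idxOf_cons_self, idxOf_cons_ne _ (Ne.symm hba)]
      exact Nat.succ_pos _
    · by_cases hcb : c = b
      · subst hcb
        rw [idxOf_cons_self, idxOf_cons_ne _ hca] at h
        omega
      · rw [idxOf_cons_ne _ hca, idxOf_cons_ne _ hcb] at h
        have h' := Nat.lt_of_succ_lt_succ h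
        by_cases hpc : p c = true
        · rw [filter_cons_of_pos hpc] at ha hb ⊢
          have ha' : a ∈ l.filter p := by
            rcases mem_cons.mp ha with h1 | h1
            · exact absurd h1.symm hca
            · exact h1
          have hb' : b ∈ l.filter p := by
            rcases mem_cons.mp hb with h1 | h1
            · exact absurd h1.symm hcb
            · exact h1
          rw [idxOf_cons_ne _ hca, idxOf_cons_ne _ hcb]
          exact Nat.succ_lt_succ (filter_indexOf_lt_filter p l ha' hb' h')
        · rw [filter_cons_of_neg (by simpa using hpc)] at ha hb ⊢
          exact filter_indexOf_lt_filter p l ha hb h'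

/-- The list underlying `moveToFront`. -/
noncomputable def mtfList {k : ℕ} (π : Equiv.Perm (Fin k)) (M : Finset (Fin k)) : List (Fin k) :=
  ((List.finRange k).map π).filter (fun x => decide (x ∈ M)) ++
    ((List.finRange k).map π).filter (fun x => !decide (x ∈ M))

theorem mtfList_perm {k : ℕ} (π : Equiv.Perm (Fin k)) (M : Finset (Fin k)) :
    (mtfList π M).Perm ((List.finRange k).map π) := List.filter_append_perm _ _

theorem mtfList_nodup {k : ℕ} (π : Equiv.Perm (Fin k)) (M : Finset (Fin k)) :
    (mtfList π M).Nodup :=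
  (mtfList_perm π M).nodup_iff.mpr ((List.nodup_finRange k).map π.injective)

theorem mtfList_length {k : ℕ} (π : Equiv.Perm (Fin k)) (M : Finset (Fin k)) :
    (mtfList π M).length = k := by simpa using (mtfList_perm π M).length_eq

theorem moveToFront_apply' {k : ℕ} (π : Equiv.Perm (Fin k)) (M : Finset (Fin k)) (x : Fin k) :
    moveToFront π M x = (mtfList π M).get (Fin.cast (mtfList_length π M).symm x) := rfl

theorem moveToFront_inv_coe {k : ℕ} (π : Equiv.Perm (Fin k)) (M : Finset (Fin k)) (x : Fin k) :
    (((moveToFront π M)⁻¹ x : Fin k) : ℕ) = (mtfList π M).idxOf x := by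
  have h1 : moveToFront π M ((moveToFront π M)⁻¹ x) = x := Equiv.apply_symm_apply _ x
  rw [moveToFront_apply'] at h1
  have := List.get_idxOf (mtfList_nodup π M)
    (Fin.cast (mtfList_length π M).symm ((moveToFront π M)⁻¹ x))
  rw [h1] at this
  simpa using this.symm

theorem moveToFront_step {k : ℕ} (π : Equiv.Perm (Fin k)) (M : Finset (Fin k)) {i j : Fin k}
    (hjM : j ∉ M) (h : i ∈ M ∨ (π⁻¹ i : Fin k) < π⁻¹ j) :
    ((moveToFront π M)⁻¹ i : Fin k) < (moveToFront π M)⁻¹ j := by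
  rw [Fin.lt_def, moveToFront_inv_coe, moveToFront_inv_coe]
  set l := (List.finRange k).map π with hl
  have hnd : l.Nodup := (List.nodup_finRange k).map π.injective
  have hmem : ∀ x : Fin k, x ∈ l := fun x => by
    rw [hl, List.mem_map]
    exact ⟨π⁻¹ x, List.mem_finRange _, Equiv.apply_symm_apply π x⟩
  have hidx : ∀ x : Fin k, l.idxOf x = (π⁻¹ x : ℕ) := fun x => by
    have hlen : ((π⁻¹ x : Fin k) : ℕ) < l.length := by simp [hl]
    have h1 : l[((π⁻¹ x : Fin k) : ℕ)]'hlen = x := by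
      simp [hl]
    conv_lhs => rw [← h1]
    exact List.Nodup.idxOf_getElem hnd _ _
  have hjA : j ∉ l.filter (fun x => decide (x ∈ M)) := by
    simp [List.mem_filter, hjM]
  have hjB : j ∈ l.filter (fun x => !decide (x ∈ M)) :=
    List.mem_filter.mpr ⟨hmem j, by simp [hjM]⟩
  by_cases hiM : i ∈ M
  · have hiA : i ∈ l.filter (fun x => decide (x ∈ M)) :=
      List.mem_filter.mpr ⟨hmem i, by simp [hiM]⟩
    rw [mtfList, ← hl, List.idxOf_append_of_mem hiA, List.idxOf_append_of_notMem hjA]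
    exact lt_of_lt_of_le (List.idxOf_lt_length_iff.2 hiA) (Nat.le_add_right _ _)
  · have hlt := h.resolve_left hiM
    have hiA : i ∉ l.filter (fun x => decide (x ∈ M)) := by
      simp [List.mem_filter, hiM]
    have hiB : i ∈ l.filter (fun x => !decide (x ∈ M)) :=
      List.mem_filter.mpr ⟨hmem i, by simp [hiM]⟩
    rw [mtfList, ← hl, List.idxOf_append_of_notMem hiA, List.idxOf_append_of_notMem hjA]
    have hll : l.idxOf i < l.idxOf j := by
      rw [hidx, hidx]
      exact hlt
    exact Nat.add_lt_add_left (filter_indexOf_lt_filter _ l hiB hjB hll) _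

/-- In a move-to-front record, infinitely-visited indices eventually precede
finitely-visited ones. -/
theorem infinitely_visited_precedes_finitely_visited {k : ℕ}
    (π0 : Equiv.Perm (Fin k)) (M : ℕ → Finset (Fin k)) (i j : Fin k)
    (hij : i ≠ j)
    (hi : Set.Infinite {t : ℕ | i ∈ M t})
    (hj : Set.Finite {t : ℕ | j ∈ M t}) :
    ∃ T : ℕ, ∀ t ≥ T, ((mtfSeq π0 M t)⁻¹ i : Fin k) < (mtfSeq π0 M t)⁻¹ j := by
  obtain ⟨N, hN⟩ := hj.bddAbove
  have hjN : ∀ t, N < t → j ∉ M t := fun t ht hmem =>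
    absurd (hN hmem) (not_le.mpr ht)
  obtain ⟨t₀, ht₀mem, ht₀⟩ := hi.exists_gt N
  refine ⟨t₀ + 1, fun t ht => ?_⟩
  induction t, ht using Nat.le_induction with
  | base =>
    exact moveToFront_step _ _ (hjN t₀ ht₀) (Or.inl ht₀mem)
  | succ n hn ih =>
    exact moveToFront_step _ _ (hjN n (lt_of_lt_of_le ht₀ (by omega))) (Or.inr ih)
end

section
/- Correctness of the IAR priority scheme in the stabilized regime, abstract version: let ρ : ℕ → Fin k → Prop ('F-visit') and σ : ℕ → Fin k → Prop ('I-visit') describe which prohibited and required sets each step visits, and let π_t be the move-to-front record driven by M_t = {i | ρ t i}. Define priority of step t as 2·m if the maximal position m among visited pairs at step t is achieved only by an I-visit (not an F-visit at that position), 2·m+1 if it is achieved by an F-visit, and 1 if no pair is visited. If there exists n with {t | σ t n} infinite and {t | ρ t n} finite, then the limsup of the priority sequence is even and positive. -/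
/-- The move-to-front record driven by the `F`-visits `ρ`:
at step `t` the indices `i` with `ρ t i` are moved to the front. -/
noncomputable def mtfRecord {k : ℕ} (π0 : Equiv.Perm (Fin k))
    (ρ : ℕ → Fin k → Prop) : ℕ → Equiv.Perm (Fin k) :=
  mtfSeq π0 (fun t => (Set.toFinite {i : Fin k | ρ t i}).toFinset)

/-- The maximal (1-based) position among the pairs visited at step `t`
(either an `F`-visit `ρ` or an `I`-visit `σ`), or `0` if no pair is visited. -/
noncomputable def maxPos {k : ℕ} (π0 : Equiv.Perm (Fin k))
    (ρ σ : ℕ → Fin k → Prop) (t : ℕ) : ℕ :=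
  ((Set.toFinite {i : Fin k | ρ t i ∨ σ t i}).toFinset).sup
    (fun i => (((mtfRecord π0 ρ t).symm i : Fin k) : ℕ) + 1)

open Classical in
/-- The IAR priority emitted at step `t`: `1` if no pair is visited,
`2 * m + 1` if the pair at the maximal visited position `m` is `F`-visited,
and `2 * m` otherwise. -/
noncomputable def iarPrio {k : ℕ} (π0 : Equiv.Perm (Fin k))
    (ρ σ : ℕ → Fin k → Prop) (t : ℕ) : ℕ :=
  if maxPos π0 ρ σ t = 0 then 1
  else if ∃ i, ρ t i ∧ (((mtfRecord π0 ρ t).symm i : Fin k) : ℕ) + 1 = maxPos π0 ρ σ t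
    then 2 * maxPos π0 ρ σ t + 1
    else 2 * maxPos π0 ρ σ t

namespace IARAux

theorem idxfilter {α : Type*} [DecidableEq α] (l : List α) (x : α) (p : α → Bool)
    (hx : x ∈ l) (hp : p x = true) :
    (l.filter p).idxOf x = (l.take (l.idxOf x)).countP p := by
  induction l with
  | nil => simp at hx
  | cons a l ih =>
    by_cases hax : a = x
    · subst hax; simp [hp, List.idxOf_cons_self]
    · have hx' : x ∈ l := by
        rcases List.mem_cons.mp hx with h | h
        · exact absurd h.symm hax
        · exact h
      by_cases hpa : p a = true
      · rw [List.idxOf_cons_ne _ hax]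
        simp [List.filter_cons, hpa, List.idxOf_cons_ne _ hax, List.take_succ_cons,
          List.countP_cons, ih hx']
      · rw [List.idxOf_cons_ne _ hax]
        simp [List.filter_cons, hpa, List.take_succ_cons, List.countP_cons, ih hx']

theorem indexOf_lt_of_mem_take {α : Type*} [DecidableEq α] {l : List α} {x : α} {m : ℕ}
    (h : x ∈ l.take m) : l.idxOf x < m := by
  induction l generalizing m with
  | nil => simp at h
  | cons a l ih =>
    cases m with
    | zero => simp at h
    | succ m =>
      by_cases hax : a = x
      · subst hax; simp [List.idxOf_cons_self]
      · rw [List.idxOf_cons_ne _ hax]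
        have : x ∈ l.take m := by
          rcases List.mem_cons.mp (by simpa using h) with h' | h'
          · exact absurd h'.symm hax
          · exact h'
        exact Nat.succ_lt_succ (ih this)

variable {k : ℕ}

noncomputable def mtfL (π : Equiv.Perm (Fin k)) (M : Finset (Fin k)) : List (Fin k) :=
  ((List.finRange k).map π).filter (fun x => decide (x ∈ M)) ++
    ((List.finRange k).map π).filter (fun x => !decide (x ∈ M))

theorem mtfL_perm (π : Equiv.Perm (Fin k)) (M : Finset (Fin k)) :
    List.Perm (mtfL π M) ((List.finRange k).map π) :=
  List.filter_append_perm _ _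

theorem baseL_nodup (π : Equiv.Perm (Fin k)) : ((List.finRange k).map π).Nodup :=
  (List.nodup_finRange k).map π.injective

theorem mtfL_nodup (π : Equiv.Perm (Fin k)) (M : Finset (Fin k)) : (mtfL π M).Nodup :=
  (mtfL_perm π M).nodup_iff.mpr (baseL_nodup π)

theorem mtfL_length (π : Equiv.Perm (Fin k)) (M : Finset (Fin k)) : (mtfL π M).length = k := by
  simpa using (mtfL_perm π M).length_eq

theorem moveToFront_apply (π : Equiv.Perm (Fin k)) (M : Finset (Fin k)) (j : Fin k) :
    moveToFront π M j = (mtfL π M).get (Fin.cast (mtfL_length π M).symm j) := rfl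

theorem symm_coe_eq_indexOf {l : List (Fin k)} (hnd : l.Nodup) (hlen : l.length = k)
    (e : Equiv.Perm (Fin k)) (he : ∀ j, e j = l.get (Fin.cast hlen.symm j)) (x : Fin k) :
    ((e.symm x : Fin k) : ℕ) = l.idxOf x := by
  have h2 : l.get (Fin.cast hlen.symm (e.symm x)) = x := by
    rw [← he (e.symm x), Equiv.apply_symm_apply]
  have hx : x ∈ l := List.mem_iff_get.mpr ⟨_, h2⟩
  have h1 : l.get ⟨l.idxOf x, List.idxOf_lt_length_iff.mpr hx⟩ = x := List.idxOf_get _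
  have := (List.nodup_iff_injective_get.mp hnd) (h1.trans h2.symm)
  have := congrArg Fin.val this
  simpa using this.symm

theorem perm_symm_coe (π : Equiv.Perm (Fin k)) (x : Fin k) :
    ((π.symm x : Fin k) : ℕ) = ((List.finRange k).map π).idxOf x := by
  refine symm_coe_eq_indexOf (baseL_nodup π) (by simp) π (fun j => ?_) x
  simp [List.getElem_map]

theorem moveToFront_symm_coe (π : Equiv.Perm (Fin k)) (M : Finset (Fin k)) (x : Fin k) :
    (((moveToFront π M).symm x : Fin k) : ℕ) = (mtfL π M).idxOf x :=
  symm_coe_eq_indexOf (mtfL_nodup π M) (mtfL_length π M) _ (moveToFront_apply π M) x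


theorem mtfL_eq (π : Equiv.Perm (Fin k)) (M : Finset (Fin k)) :
    mtfL π M = ((List.finRange k).map π).filter (fun y => decide (y ∈ M)) ++
      ((List.finRange k).map π).filter (fun y => !decide (y ∈ M)) := rfl

theorem base_mem (π : Equiv.Perm (Fin k)) (x : Fin k) : x ∈ (List.finRange k).map π :=
  List.mem_map.mpr ⟨π.symm x, List.mem_finRange _, Equiv.apply_symm_apply π x⟩

theorem pos_le_moveToFront (π : Equiv.Perm (Fin k)) (M : Finset (Fin k)) {n : Fin k}
    (hn : n ∉ M) :
    ((π.symm n : Fin k) : ℕ) ≤ (((moveToFront π M).symm n : Fin k) : ℕ) := by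
  have hnl : n ∈ (List.finRange k).map π := base_mem π n
  have hpn : (fun y : Fin k => !decide (y ∈ M)) n = true := by simp [hn]
  have hnf : n ∉ ((List.finRange k).map π).filter (fun y => decide (y ∈ M)) := by
    simp [List.mem_filter, hn]
  rw [moveToFront_symm_coe, perm_symm_coe, mtfL_eq,
    List.idxOf_append_of_notMem hnf, idxfilter _ n _ hnl hpn]
  set l := (List.finRange k).map π with hl
  set idx := l.idxOf n with hidx
  have hidxle : idx ≤ l.length := List.idxOf_le_length
  have hlen : (l.take idx).length = idx := by simp [hidxle]
  have hsplit : (l.take idx).length = (l.take idx).countP (fun y => decide (y ∈ M)) +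
      (l.take idx).countP (fun y => !decide (y ∈ M)) := by
    simpa using List.length_eq_countP_add_countP (fun y : Fin k => decide (y ∈ M)) (l := l.take idx)
  have hle : (l.take idx).countP (fun y => decide (y ∈ M)) ≤
      (l.filter (fun y => decide (y ∈ M))).length := by
    rw [← List.countP_eq_length_filter]
    exact (l.take_sublist idx).countP_le
  omega

theorem pos_lt_moveToFront (π : Equiv.Perm (Fin k)) (M : Finset (Fin k)) {n i : Fin k}
    (hn : n ∉ M) (hi : i ∈ M)
    (hpos : ((π.symm n : Fin k) : ℕ) ≤ ((π.symm i : Fin k) : ℕ)) :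
    ((π.symm n : Fin k) : ℕ) < (((moveToFront π M).symm n : Fin k) : ℕ) := by
  have hnl : n ∈ (List.finRange k).map π := base_mem π n
  have hil : i ∈ (List.finRange k).map π := base_mem π i
  have hpn : (fun y : Fin k => !decide (y ∈ M)) n = true := by simp [hn]
  have hnf : n ∉ ((List.finRange k).map π).filter (fun y => decide (y ∈ M)) := by
    simp [List.mem_filter, hn]
  rw [perm_symm_coe, perm_symm_coe] at hpos
  rw [moveToFront_symm_coe, perm_symm_coe, mtfL_eq,
    List.idxOf_append_of_notMem hnf, idxfilter _ n _ hnl hpn]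
  set l := (List.finRange k).map π with hl
  set idx := l.idxOf n with hidx
  have hidxle : idx ≤ l.length := List.idxOf_le_length
  have hlen : (l.take idx).length = idx := by simp [hidxle]
  have hsplit : (l.take idx).length = (l.take idx).countP (fun y => decide (y ∈ M)) +
      (l.take idx).countP (fun y => !decide (y ∈ M)) := by
    simpa using List.length_eq_countP_add_countP (fun y : Fin k => decide (y ∈ M)) (l := l.take idx)
  have hidrop : i ∈ l.drop idx := by
    have hnt : i ∉ l.take idx := fun hmem =>
      absurd hpos (by simpa using indexOf_lt_of_mem_take hmem)
    have : i ∈ l.take idx ++ l.drop idx := by rw [List.take_append_drop]; exact hil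
    rcases List.mem_append.mp this with h | h
    · exact absurd h hnt
    · exact h
  have hdroppos : 0 < (l.drop idx).countP (fun y => decide (y ∈ M)) :=
    List.countP_pos_iff.mpr ⟨i, hidrop, by simpa using hi⟩
  have hcount : (l.filter (fun y => decide (y ∈ M))).length =
      (l.take idx).countP (fun y => decide (y ∈ M)) +
      (l.drop idx).countP (fun y => decide (y ∈ M)) := by
    rw [← List.countP_eq_length_filter, ← List.countP_append, List.take_append_drop]
  omega

end IARAux

open IARAux in
/-- Correctness of the IAR priority scheme (abstract version), accepting
direction: if some pair `n` has infinitely many `I`-visits but only finitely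
many `F`-visits, then the maximal priority occurring infinitely often in the
priority sequence is even and positive. -/
theorem iar_priority_accepting {k : ℕ} (hk : 0 < k)
    (π0 : Equiv.Perm (Fin k)) (ρ σ : ℕ → Fin k → Prop)
    (h : ∃ n : Fin k, Set.Infinite {t : ℕ | σ t n} ∧ Set.Finite {t : ℕ | ρ t n}) :
    Even (sSup {p : ℕ | Set.Infinite {t : ℕ | iarPrio π0 ρ σ t = p}}) ∧
      0 < sSup {p : ℕ | Set.Infinite {t : ℕ | iarPrio π0 ρ σ t = p}} := by
  classical
  obtain ⟨n, hσinf, hρfin⟩ := h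
  set Mt : ℕ → Finset (Fin k) := fun t => (Set.toFinite {i : Fin k | ρ t i}).toFinset with hMt
  set pos : ℕ → Fin k → ℕ := fun t x => (((mtfRecord π0 ρ t).symm x : Fin k) : ℕ) with hposdef
  have hrec : ∀ t, mtfRecord π0 ρ (t + 1) = moveToFront (mtfRecord π0 ρ t) (Mt t) := fun t => rfl
  have hmemMt : ∀ t i, i ∈ Mt t ↔ ρ t i := by
    intro t i; simp [hMt, Set.Finite.mem_toFinset]
  -- T0 : past all ρ-visits of n
  obtain ⟨T0, hT0⟩ : ∃ T0, ∀ t, T0 ≤ t → ¬ ρ t n := by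
    rcases (hρfin.bddAbove) with ⟨B, hB⟩
    exact ⟨B + 1, fun t ht hρ => by
      have := hB (Set.mem_setOf.mpr hρ); omega⟩
  have hnotmem : ∀ t, T0 ≤ t → n ∉ Mt t := fun t ht hm => hT0 t ht ((hmemMt t n).mp hm)
  -- monotone
  have hmono1 : ∀ t, T0 ≤ t → pos t n ≤ pos (t + 1) n := by
    intro t ht
    exact pos_le_moveToFront _ _ (hnotmem t ht)
  have hg : Monotone (fun b => pos (T0 + b) n) := by
    apply monotone_nat_of_le_succ
    intro b
    exact hmono1 (T0 + b) (Nat.le_add_right _ _)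
  -- stabilization
  have hbdd : BddAbove (Set.range fun b => pos (T0 + b) n) := by
    refine ⟨k, ?_⟩
    rintro x ⟨b, rfl⟩
    exact le_of_lt (Fin.is_lt _)
  obtain ⟨a, ha⟩ : ∃ a, pos (T0 + a) n = sSup (Set.range fun b => pos (T0 + b) n) :=
    Nat.sSup_mem (Set.range_nonempty _) hbdd
  set T1 := T0 + a with hT1
  set q := pos T1 n with hq
  have hstab : ∀ t, T1 ≤ t → pos t n = q := by
    intro t ht
    have h1 : pos t n = pos (T0 + (t - T0)) n := by
      congr 1; omega
    refine le_antisymm ?_ ?_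
    · rw [h1, ha]; exact le_csSup hbdd ⟨t - T0, rfl⟩
    · rw [h1]; exact hg (by omega : a ≤ t - T0)
  have hT0T1 : T0 ≤ T1 := Nat.le_add_right _ _
  -- after T1, every ρ-visited index sits at position < q
  have hvis : ∀ t, T1 ≤ t → ∀ i, ρ t i → pos t i < q := by
    intro t ht i hρi
    by_contra hcon
    push_neg at hcon
    have hlt : pos t n < pos (t + 1) n :=
      pos_lt_moveToFront _ _ (hnotmem t (hT0T1.trans ht)) ((hmemMt t i).mpr hρi)
        (le_trans (le_of_eq (hstab t ht)) hcon)
    rw [hstab t ht, hstab (t + 1) (ht.trans (Nat.le_succ t))] at hlt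
    omega
  -- basic priority bounds
  have hmaxle : ∀ t, maxPos π0 ρ σ t ≤ k := by
    intro t
    apply Finset.sup_le
    intro i _
    exact Nat.succ_le_of_lt (Fin.is_lt _)
  have hprio_le : ∀ t, iarPrio π0 ρ σ t ≤ 2 * k + 1 := by
    intro t
    unfold iarPrio
    have := hmaxle t
    split_ifs <;> omega
  -- big priority at σ-visits of n after T1
  have hbig : ∀ t, T1 ≤ t → σ t n → 2 * (q + 1) ≤ iarPrio π0 ρ σ t := by
    intro t ht hσt
    have hmem : n ∈ (Set.toFinite {i : Fin k | ρ t i ∨ σ t i}).toFinset := by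
      rw [Set.Finite.mem_toFinset]; exact Or.inr hσt
    have hle : q + 1 ≤ maxPos π0 ρ σ t := by
      have := Finset.le_sup (f := fun i => (((mtfRecord π0 ρ t).symm i : Fin k) : ℕ) + 1) hmem
      rw [← hstab t ht]
      exact this
    unfold iarPrio
    split_ifs <;> omega
  -- the set of infinitely occurring priorities
  set S := {p : ℕ | Set.Infinite {t : ℕ | iarPrio π0 ρ σ t = p}} with hS
  have hSbdd : BddAbove S := by
    refine ⟨2 * k + 1, ?_⟩
    intro p hp
    obtain ⟨t, ht⟩ := hp.nonempty
    exact ht ▸ hprio_le t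
  -- pigeonhole: some priority ≥ 2(q+1) occurs infinitely often
  have hs : Set.Infinite ({t : ℕ | σ t n} \ Set.Iio T1) := hσinf.diff (Set.finite_Iio T1)
  obtain ⟨p, hpmem, hpinf⟩ : ∃ p ∈ Finset.Icc (2 * (q + 1)) (2 * k + 1),
      Set.Infinite {t ∈ ({t : ℕ | σ t n} \ Set.Iio T1) | iarPrio π0 ρ σ t = p} := by
    by_contra hcon
    push_neg at hcon
    have hcover : ({t : ℕ | σ t n} \ Set.Iio T1) ⊆
        ⋃ p ∈ (Finset.Icc (2 * (q + 1)) (2 * k + 1) : Finset ℕ),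
          {t ∈ ({t : ℕ | σ t n} \ Set.Iio T1) | iarPrio π0 ρ σ t = p} := by
      intro t ht
      have hT1t : T1 ≤ t := not_lt.mp fun hlt => ht.2 (Set.mem_Iio.mpr hlt)
      exact Set.mem_biUnion
        (Finset.mem_coe.mpr (Finset.mem_Icc.mpr ⟨hbig t hT1t ht.1, hprio_le t⟩)) ⟨ht, rfl⟩
    exact hs ((Set.Finite.biUnion (Finset.finite_toSet _)
      (fun p hp => hcon p (by simpa using hp))).subset hcover)
  have hpS : p ∈ S := by
    refine hpinf.mono ?_
    intro t ht
    exact ht.2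
  have hplow : 2 * (q + 1) ≤ p := (Finset.mem_Icc.mp hpmem).1
  have hPlow : 2 * (q + 1) ≤ sSup S := le_trans hplow (le_csSup hSbdd hpS)
  constructor
  · -- evenness
    have hPS : sSup S ∈ S := Nat.sSup_mem ⟨p, hpS⟩ hSbdd
    by_contra hodd
    obtain ⟨t, htmem, htgt⟩ := Set.Infinite.exists_gt hPS T1
    have htP : iarPrio π0 ρ σ t = sSup S := htmem
    have hT1t : T1 ≤ t := le_of_lt htgt
    unfold iarPrio at htP
    split_ifs at htP with h1 h2
    · omega
    · -- odd branch : contradiction with hvis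
      obtain ⟨i, hρi, hposi⟩ := h2
      have hlt : (((mtfRecord π0 ρ t).symm i : Fin k) : ℕ) < q := hvis t hT1t i hρi
      omega
    · -- even branch: contradicts oddness assumption
      exact hodd ⟨maxPos π0 ρ σ t, by omega⟩
  · omega
end
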